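/- Given points P_s, P_{s+1}, …, P_{s+k} in ℝ³ with strictly increasing time coordinates, ε > 0, and any t_c > P_s.t, there exists a point Q with Q.t = P_{s+k}.t such that sed(P_{s+i}, segment P_sQ) ≤ ε for all i ∈ [1,k], if and only if the k projection disks D_i of radius c_i·ε centered at P_s + c_i·(P_{s+i} - P_s) on the plane X.t = t_c, where c_i = (t_c - P_s.t)/(P_{s+i}.t - P_s.t), have nonempty common intersection. -/

import Mathlib

noncomputable section

/-- Points of ℝ³, written (x, y, t) with the third coordinate interpreted as time. -/
abbrev Pt : Type := EuclideanSpace ℝ (Fin 3)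

/-- The time coordinate of a point. -/
def tm (P : Pt) : ℝ := P 2

/-- Spatial (x,y)-Euclidean distance between two points of ℝ³. -/
def sdist (P Q : Pt) : ℝ := Real.sqrt ((P 0 - Q 0)^2 + (P 1 - Q 1)^2)

/-- The synchronized point of `P` w.r.t. the segment from `Ps` to `E`:
linear interpolation with coefficient `c = (P.t - Ps.t)/(E.t - Ps.t)`. -/
def sync (Ps E P : Pt) : Pt := Ps + ((tm P - tm Ps) / (tm E - tm Ps)) • (E - Ps)

/-- The synchronous Euclidean distance of `P` to the segment from `Ps` to `E`. -/
def sed (P Ps E : Pt) : ℝ := dist P (sync Ps E P)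

/-- The spatio-temporal cone with apex `Ps` over the disk of radius `ε`
centered at `C` in the plane `X.t = C.t`: the union of all segments from `Ps`
to points of that disk. -/
def cone (Ps C : Pt) (ε : ℝ) : Set Pt :=
  {X | ∃ Z : Pt, tm Z = tm C ∧ sdist Z C ≤ ε ∧ X ∈ segment ℝ Ps Z}

lemma sdist_le_dist' (P Q : Pt) : sdist P Q ≤ dist P Q := by
  rw [EuclideanSpace.dist_eq]
  unfold sdist
  apply Real.sqrt_le_sqrt
  rw [Fin.sum_univ_three]
  simp only [Real.dist_eq, sq_abs]
  nlinarith [sq_nonneg (P 2 - Q 2)]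

lemma dist_eq_sdist' (P Q : Pt) (h : P 2 = Q 2) : dist P Q = sdist P Q := by
  rw [EuclideanSpace.dist_eq, Fin.sum_univ_three]
  unfold sdist
  simp [Real.dist_eq, sq_abs, h]

lemma sdist_scale (c : ℝ) (A B C D : Pt) (h0 : A 0 - B 0 = c * (C 0 - D 0))
    (h1 : A 1 - B 1 = c * (C 1 - D 1)) : sdist A B = |c| * sdist C D := by
  unfold sdist
  rw [h0, h1, mul_pow, mul_pow, ← mul_add, Real.sqrt_mul (sq_nonneg c), Real.sqrt_sq_eq_abs]

/-- existence of Q at time P_{s+k}.t with all synchronous distances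
at most ε iff the k projection disks on the plane X.t = t_c have a common point. -/
theorem stmt3 (k : ℕ) (hk : 1 ≤ k) (P : ℕ → Pt)
    (hmono : ∀ i j : ℕ, i < j → j ≤ k → tm (P i) < tm (P j))
    (ε : ℝ) (hε : 0 < ε) (tc : ℝ) (htc : tm (P 0) < tc) :
    (∃ Q : Pt, tm Q = tm (P k) ∧ ∀ i : ℕ, 1 ≤ i → i ≤ k → sed (P i) (P 0) Q ≤ ε) ↔
      (⋂ i ∈ Set.Icc 1 k, {X : Pt | tm X = tc ∧
        sdist X (P 0 + ((tc - tm (P 0)) / (tm (P i) - tm (P 0))) • (P i - P 0)) ≤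
          ((tc - tm (P 0)) / (tm (P i) - tm (P 0))) * ε}).Nonempty := by
  have hT : tm (P 0) < tm (P k) := hmono 0 k hk le_rfl
  have hTne : P k 2 - P 0 2 ≠ 0 := by have : tm (P 0) < tm (P k) := hT; unfold tm at this; linarith
  have hcne : tc - P 0 2 ≠ 0 := by unfold tm at htc; linarith
  have hc : 0 < (tc - tm (P 0)) / (tm (P k) - tm (P 0)) :=
    div_pos (by linarith) (by linarith)
  constructor
  · rintro ⟨Q, hQt, hsed⟩
    have hQ2 : Q 2 = P k 2 := hQt
    set X : Pt := P 0 + ((tc - tm (P 0)) / (tm (P k) - tm (P 0))) • (Q - P 0) with hXdef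
    have hXj : ∀ j, X j = P 0 j + ((tc - P 0 2) / (P k 2 - P 0 2)) * (Q j - P 0 j) := by
      intro j
      simp only [hXdef, tm, PiLp.add_apply, PiLp.smul_apply, PiLp.sub_apply, smul_eq_mul]
    refine ⟨X, ?_⟩
    rw [Set.mem_iInter₂]
    rintro i ⟨hi1, hik⟩
    have hti : tm (P 0) < tm (P i) := hmono 0 i (by omega) hik
    have htine : P i 2 - P 0 2 ≠ 0 := by unfold tm at hti; linarith
    have hci : 0 < (tc - tm (P 0)) / (tm (P i) - tm (P 0)) :=
      div_pos (by linarith) (by linarith)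
    have hsyncj : ∀ j, (sync (P 0) Q (P i)) j
        = P 0 j + ((P i 2 - P 0 2) / (P k 2 - P 0 2)) * (Q j - P 0 j) := by
      intro j
      simp only [sync, tm, PiLp.add_apply, PiLp.smul_apply, PiLp.sub_apply, smul_eq_mul, hQ2]
    constructor
    · show tm X = tc
      show X 2 = tc
      rw [hXj 2, hQ2]
      field_simp
      ring
    · show sdist X _ ≤ _
      have key : sdist X (P 0 + ((tc - tm (P 0)) / (tm (P i) - tm (P 0))) • (P i - P 0))
          = |(tc - tm (P 0)) / (tm (P i) - tm (P 0))| *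
            sdist (sync (P 0) Q (P i)) (P i) := by
        apply sdist_scale <;>
        · first
          | (rw [hXj 0, hsyncj 0]
             simp only [tm, PiLp.add_apply, PiLp.smul_apply, PiLp.sub_apply, smul_eq_mul]
             field_simp; ring)
          | (rw [hXj 1, hsyncj 1]
             simp only [tm, PiLp.add_apply, PiLp.smul_apply, PiLp.sub_apply, smul_eq_mul]
             field_simp; ring)
      rw [key, abs_of_pos hci]
      have h1 : sdist (sync (P 0) Q (P i)) (P i) ≤ ε := by
        have h := hsed i hi1 hik
        rw [sed] at h
        calc sdist (sync (P 0) Q (P i)) (P i)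
            ≤ dist (sync (P 0) Q (P i)) (P i) := sdist_le_dist' _ _
          _ = dist (P i) (sync (P 0) Q (P i)) := dist_comm _ _
          _ ≤ ε := h
      exact mul_le_mul_of_nonneg_left h1 hci.le
  · rintro ⟨X, hX⟩
    rw [Set.mem_iInter₂] at hX
    have hX2 : X 2 = tc := (hX 1 ⟨le_rfl, hk⟩).1
    set Q : Pt := P 0 + ((tc - tm (P 0)) / (tm (P k) - tm (P 0)))⁻¹ • (X - P 0) with hQdef
    have hQj : ∀ j, Q j = P 0 j + ((tc - P 0 2) / (P k 2 - P 0 2))⁻¹ * (X j - P 0 j) := by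
      intro j
      simp only [hQdef, tm, PiLp.add_apply, PiLp.smul_apply, PiLp.sub_apply, smul_eq_mul]
    have hQ2 : Q 2 = P k 2 := by rw [hQj 2, hX2]; field_simp; ring
    refine ⟨Q, hQ2, ?_⟩
    intro i hi1 hik
    obtain ⟨hXt, hXd⟩ := hX i ⟨hi1, hik⟩
    have hti : tm (P 0) < tm (P i) := hmono 0 i (by omega) hik
    have htine : P i 2 - P 0 2 ≠ 0 := by unfold tm at hti; linarith
    have hci : 0 < (tc - tm (P 0)) / (tm (P i) - tm (P 0)) :=
      div_pos (by linarith) (by linarith)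
    have hsyncj : ∀ j, (sync (P 0) Q (P i)) j
        = P 0 j + ((P i 2 - P 0 2) / (P k 2 - P 0 2)) * (Q j - P 0 j) := by
      intro j
      simp only [sync, tm, PiLp.add_apply, PiLp.smul_apply, PiLp.sub_apply, smul_eq_mul, hQ2]
    have hsync2 : (sync (P 0) Q (P i)) 2 = P i 2 := by
      rw [hsyncj 2, hQ2]; field_simp; ring
    rw [sed, dist_eq_sdist' _ _ hsync2.symm]
    have key : sdist (P i) (sync (P 0) Q (P i))
        = |((tc - tm (P 0)) / (tm (P i) - tm (P 0)))⁻¹| *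
          sdist (P 0 + ((tc - tm (P 0)) / (tm (P i) - tm (P 0))) • (P i - P 0)) X := by
      apply sdist_scale <;>
      · first
        | (rw [hsyncj 0, hQj 0]
           simp only [tm, PiLp.add_apply, PiLp.smul_apply, PiLp.sub_apply, smul_eq_mul]
           field_simp; ring)
        | (rw [hsyncj 1, hQj 1]
           simp only [tm, PiLp.add_apply, PiLp.smul_apply, PiLp.sub_apply, smul_eq_mul]
           field_simp; ring)
    rw [key, abs_of_pos (inv_pos.mpr hci)]
    have h2 : sdist (P 0 + ((tc - tm (P 0)) / (tm (P i) - tm (P 0))) • (P i - P 0)) X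
        ≤ (tc - tm (P 0)) / (tm (P i) - tm (P 0)) * ε := by
      calc _ = sdist X (P 0 + ((tc - tm (P 0)) / (tm (P i) - tm (P 0))) • (P i - P 0)) := by
            unfold sdist; ring_nf
        _ ≤ _ := hXd
    calc ((tc - tm (P 0)) / (tm (P i) - tm (P 0)))⁻¹ *
          sdist (P 0 + ((tc - tm (P 0)) / (tm (P i) - tm (P 0))) • (P i - P 0)) X
        ≤ ((tc - tm (P 0)) / (tm (P i) - tm (P 0)))⁻¹ *
          ((tc - tm (P 0)) / (tm (P i) - tm (P 0)) * ε) :=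
        mul_le_mul_of_nonneg_left h2 (inv_pos.mpr hci).le
      _ = ε := by
          rw [← mul_assoc, inv_mul_cancel₀ (ne_of_gt hci), one_mul]
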